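/- For every n > 0 and every m < n, the target s_n is unreachable in the filter protocol F_n with m processes: every configuration γ reachable from ⟨s_0^m, 0⟩ satisfies st(γ)(s_n) = 0. -/

import Mathlib

/-- Operation type of a register protocol: read or write. -/
inductive Op : Type
  | R : Op
  | W : Op
deriving DecidableEq

instance instFintypeOp : Fintype Op :=
  ⟨{Op.R, Op.W}, fun x => by cases x <;> simp⟩

/-- A location has at least one outgoing transition. -/
def Nonblock {Q D : Type*} (T : Set (Q × Op × D × Q)) : Prop :=
  ∀ q : Q, ∃ op d q', (q, op, d, q') ∈ T

/-- Whenever a read transition exists from `q`, reads of every datum are enabled in `q`. -/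
def ReadTotal {Q D : Type*} (T : Set (Q × Op × D × Q)) : Prop :=
  ∀ q d' q', (q, Op.R, d', q') ∈ T → ∀ d : D, ∃ qd, (q, Op.R, d, qd) ∈ T

/-- One step of the distributed system associated with transition set `T`:
a configuration is a pair of a finite multiset of locations and a register datum. -/
def IsStep {Q D : Type*} [DecidableEq Q] (T : Set (Q × Op × D × Q)) :
    Multiset Q × D → Multiset Q × D → Prop := fun γ γ' =>
  ∃ q op d'' q', (q, op, d'', q') ∈ T ∧ q ∈ γ.1 ∧
    γ'.1 = γ.1 - {q} + {q'} ∧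
    ((op = Op.R ∧ γ.2 = d'' ∧ γ'.2 = d'') ∨ (op = Op.W ∧ γ'.2 = d''))

/-- Reachability: reflexive-transitive closure of the step relation. -/
def Reach {Q D : Type*} [DecidableEq Q] (T : Set (Q × Op × D × Q)) :
    Multiset Q × D → Multiset Q × D → Prop :=
  Relation.ReflTransGen (IsStep T)

/-- `PostStar T S` is the set of configurations reachable from some configuration of `S`. -/
def PostStar {Q D : Type*} [DecidableEq Q] (T : Set (Q × Op × D × Q))
    (S : Set (Multiset Q × D)) : Set (Multiset Q × D) :=
  {γ' | ∃ γ ∈ S, Reach T γ γ'}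

/-- `PreStar T S` is the set of configurations from which some configuration of `S`
is reachable. -/
def PreStar {Q D : Type*} [DecidableEq Q] (T : Set (Q × Op × D × Q))
    (S : Set (Multiset Q × D)) : Set (Multiset Q × D) :=
  {γ | ∃ γ' ∈ S, Reach T γ γ'}

/-- `[qf]`: configurations containing at least one process in location `qf`. -/
def TargetSet {Q D : Type*} [DecidableEq Q] (qf : Q) : Set (Multiset Q × D) :=
  {γ | 0 < γ.1.count qf}

/-- The order `⪯` on configurations: same register content, same support,
and componentwise smaller multiset. -/
def ConfLE {Q D : Type*} [DecidableEq Q] (γ γ' : Multiset Q × D) : Prop :=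
  γ.2 = γ'.2 ∧ γ.1.toFinset = γ'.1.toFinset ∧ γ.1 ≤ γ'.1

/-- Upward closure of a set of configurations with respect to `⪯`. -/
def UpSet {Q D : Type*} [DecidableEq Q] (B : Set (Multiset Q × D)) :
    Set (Multiset Q × D) :=
  {γ' | ∃ γ ∈ B, ConfLE γ γ'}

/-- Transitions of the filter protocol `F_n` (for `n > 0`): locations
`s_0, …, s_n` are `Fin (n+1)`, data `0, …, n−1` are `Fin n`. Transitions:
`(s_0, W, 0, s_0)`; `(s_i, R, i, s_{i+1})` for `0 ≤ i ≤ n−1`;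
`(s_i, W, i, s_0)` for `1 ≤ i ≤ n−1`; and read self-loops `(s, R, d, s)` for
every pair `(s, d)` for which no other read transition is specified. -/
def FilterT (n : ℕ) : Set (Fin (n + 1) × Op × Fin n × Fin (n + 1)) := fun t =>
  match t with
  | (s, Op.W, d, s') =>
      ((s : ℕ) = 0 ∧ (d : ℕ) = 0 ∧ (s' : ℕ) = 0) ∨
      (1 ≤ (s : ℕ) ∧ (s : ℕ) ≤ n - 1 ∧ (d : ℕ) = (s : ℕ) ∧ (s' : ℕ) = 0)
  | (s, Op.R, d, s') =>
      ((s : ℕ) ≤ n - 1 ∧ (d : ℕ) = (s : ℕ) ∧ (s' : ℕ) = (s : ℕ) + 1) ∨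
      (¬ ((s : ℕ) ≤ n - 1 ∧ (d : ℕ) = (s : ℕ)) ∧ s' = s)


namespace Stmt13Aux

variable {n : ℕ}

def Nge (k : ℕ) (μ : Multiset (Fin (n+1))) : ℕ :=
  (μ.filter (fun s : Fin (n+1) => k ≤ s.val)).card

lemma Nge_cons (k : ℕ) (q : Fin (n+1)) (μ : Multiset (Fin (n+1))) :
    Nge k (q ::ₘ μ) = Nge k μ + (if k ≤ q.val then 1 else 0) := by
  unfold Nge
  rw [Multiset.filter_cons, Multiset.card_add]
  split_ifs <;> simp [add_comm]

lemma Nge_le_card (k : ℕ) (μ : Multiset (Fin (n+1))) :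
    Nge k μ ≤ Multiset.card μ := by
  unfold Nge
  exact Multiset.card_le_card (Multiset.filter_le _ _)

lemma Nge_mono {k l : ℕ} (h : k ≤ l) (μ : Multiset (Fin (n+1))) :
    Nge l μ ≤ Nge k μ := by
  unfold Nge
  apply Multiset.card_le_card
  apply Multiset.monotone_filter_right
  intro s hs
  omega

def Phi (k : ℕ) (γ : Multiset (Fin (n+1)) × Fin n) : ℕ :=
  Nge k γ.1 + (if k ≤ γ.2.val then 1 else 0)

def Inv (m : ℕ) (γ : Multiset (Fin (n+1)) × Fin n) : Prop :=
  Multiset.card γ.1 = m ∧ ∀ k, 1 ≤ k → Phi k γ = 0 ∨ Phi k γ + k ≤ m + 1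

lemma inv_step {m : ℕ} {γ γ' : Multiset (Fin (n+1)) × Fin n}
    (hinv : Inv m γ) (hs : IsStep (FilterT n) γ γ') : Inv m γ' := by
  obtain ⟨q, op, d'', q', ht, hq, h1, h2⟩ := hs
  obtain ⟨hcard, hinvk⟩ := hinv
  have hμ' : γ'.1 = q' ::ₘ γ.1.erase q := by
    rw [h1, Multiset.sub_singleton]
    exact (add_comm _ _).trans (Multiset.singleton_add _ _)
  have hμ : γ.1 = q ::ₘ γ.1.erase q := (Multiset.cons_erase hq).symm
  have hcE : Multiset.card (γ.1.erase q) + 1 = m := by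
    rw [hμ, Multiset.card_cons] at hcard
    omega
  have hcard' : Multiset.card γ'.1 = m := by
    rw [hμ', Multiset.card_cons]
    omega
  refine ⟨hcard', ?_⟩
  intro k hk1
  have hNγ : Nge k γ.1 = Nge k (γ.1.erase q) + (if k ≤ q.val then 1 else 0) := by
    conv_lhs => rw [hμ]
    exact Nge_cons ..
  have hNγ' : Nge k γ'.1 = Nge k (γ.1.erase q) + (if k ≤ q'.val then 1 else 0) := by
    rw [hμ']
    exact Nge_cons ..
  have hinvK := hinvk k hk1
  cases op with
  | W =>
    -- write step: register becomes d'', process moves q → q' with q'.val = 0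
    rcases h2 with ⟨h2a, _⟩ | ⟨_, hγ'2⟩
    · exact absurd h2a (by simp)
    simp only [FilterT, Membership.mem, Set.Mem] at ht
    have hq'0 : q'.val = 0 := by rcases ht with ⟨_, _, h⟩ | ⟨_, _, _, h⟩ <;> exact h
    have hd : d''.val ≤ q.val := by rcases ht with ⟨h0, hd0, _⟩ | ⟨_, _, hd0, _⟩ <;> omega
    have hP' : Phi k γ' ≤ Phi k γ := by
      simp only [Phi]
      rw [hNγ, hNγ', hγ'2, if_neg (by omega : ¬ k ≤ q'.val)]
      split_ifs <;> omega
    rcases hinvK with h | h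
    · left; omega
    · by_cases h0 : Phi k γ' = 0
      · left; exact h0
      · right; omega
  | R =>
    rcases h2 with ⟨_, hγ2, hγ'2⟩ | ⟨h2a, _⟩
    · simp only [FilterT, Membership.mem, Set.Mem] at ht
      rcases ht with ⟨hle, hd, hq'⟩ | ⟨_, hq'⟩
      · -- advancing read: q'.val = q.val + 1, register = q.val
        have hγ2v : γ.2.val = q.val := by rw [hγ2]; exact hd
        have hγ'2v : γ'.2.val = q.val := by rw [hγ'2]; exact hd
        by_cases hkq : k ≤ q.val
        · -- Phi unchanged
          have : Phi k γ' = Phi k γ := by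
            simp only [Phi]
            rw [hNγ, hNγ', hγ2v, hγ'2v, if_pos hkq, if_pos (by omega : k ≤ q'.val)]
          rw [this]
          exact hinvK
        · by_cases hkq1 : k = q.val + 1
          · -- Phi increases by one; need the bound
            have hP' : Phi k γ' = Nge k (γ.1.erase q) + 1 := by
              simp only [Phi]
              rw [hNγ', hγ'2v, if_pos (by omega : k ≤ q'.val), if_neg hkq]
            rcases Nat.eq_zero_or_pos q.val with hq0 | hq0
            · -- q.val = 0, k = 1
              have hE : Nge k (γ.1.erase q) ≤ Multiset.card (γ.1.erase q) :=
                Nge_le_card ..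
              right
              omega
            · -- use invariant at level q.val
              have hinvQ := hinvk q.val hq0
              have hNq : Nge q.val γ.1 = Nge q.val (γ.1.erase q) + 1 := by
                conv_lhs => rw [hμ]
                rw [Nge_cons, if_pos (le_refl _)]
              have hPq : Phi q.val γ = Nge q.val (γ.1.erase q) + 2 := by
                simp only [Phi]
                rw [hNq, hγ2v, if_pos (le_refl _)]
              have hmono : Nge k (γ.1.erase q) ≤ Nge q.val (γ.1.erase q) :=
                Nge_mono (by omega) _
              right
              omega
          · -- k > q.val + 1 : Phi unchanged
            have : Phi k γ' = Phi k γ := by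
              simp only [Phi]
              rw [hNγ, hNγ', hγ2v, hγ'2v, if_neg hkq, if_neg (by omega : ¬ k ≤ q'.val)]
            rw [this]
            exact hinvK
      · -- self-loop read: nothing changes
        have : Phi k γ' = Phi k γ := by
          simp only [Phi]
          rw [hNγ, hNγ', hq', hγ2, hγ'2]
        rw [this]
        exact hinvK
    · exact absurd h2a (by simp)

lemma inv_reach {m : ℕ} {γ0 γ : Multiset (Fin (n+1)) × Fin n}
    (h0 : Inv m γ0) (h : Reach (FilterT n) γ0 γ) : Inv m γ := by
  induction h with
  | refl => exact h0
  | tail _ hstep ih => exact inv_step ih hstep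

lemma inv_init (n m : ℕ) (hn : 0 < n) :
    Inv m ((Multiset.replicate m (⟨0, by omega⟩ : Fin (n + 1)), (⟨0, hn⟩ : Fin n))) := by
  constructor
  · exact Multiset.card_replicate ..
  · intro k hk
    left
    simp only [Phi, Nge]
    rw [Multiset.filter_eq_nil.mpr, if_neg (by simp; omega)]
    · simp
    · intro a ha
      have := Multiset.eq_of_mem_replicate ha
      subst this
      simp
      omega

end Stmt13Aux

/-- with fewer than `n` processes, the target `s_n` of the filter
protocol `F_n` is unreachable: every reachable configuration contains no process
in `s_n`. -/
theorem stmt_13 (n : ℕ) (hn : 0 < n) (m : ℕ) (hm : m < n)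
    (γ : Multiset (Fin (n + 1)) × Fin n)
    (hreach : Reach (FilterT n)
      (Multiset.replicate m (⟨0, by omega⟩ : Fin (n + 1)), (⟨0, hn⟩ : Fin n)) γ) :
    γ.1.count (Fin.last n) = 0 := by
  have hinv := Stmt13Aux.inv_reach (Stmt13Aux.inv_init n m hn) hreach
  obtain ⟨hcard, hk⟩ := hinv
  by_contra hne
  have hcnt : 0 < γ.1.count (Fin.last n) := Nat.pos_of_ne_zero hne
  have hle : γ.1.count (Fin.last n) ≤ Stmt13Aux.Nge n γ.1 := by
    unfold Stmt13Aux.Nge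
    calc γ.1.count (Fin.last n)
        = (γ.1.filter (fun s : Fin (n+1) => n ≤ s.val)).count (Fin.last n) := by
          rw [Multiset.count_filter]
          simp
      _ ≤ _ := Multiset.count_le_card _ _
  have hPhi : 0 < Stmt13Aux.Phi n γ := by
    simp only [Stmt13Aux.Phi]
    omega
  rcases hk n hn with h | h
  · omega
  · simp only [Stmt13Aux.Phi] at h
    omega
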